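/- Let n ≥ 3 and let i be an integer with 1 ≤ i ≤ n−2. Then the number of permutations p of {1,…,n} whose minmax tree T^m_p contains the entry p_i as a leaf is exactly n!/3. -/

import Mathlib

/-- Binary trees with natural-number labels, used to model minmax trees of
permutations. -/
inductive BTree where
  | nil : BTree
  | node : ℕ → BTree → BTree → BTree
deriving DecidableEq, Repr

namespace BTree

/-- The label of the root (if any). -/
def rootVal : BTree → Option ℕ
  | .nil => none
  | .node v _ _ => some v

/-- Whether the value `x` occurs as a label in the tree. -/
def memB : BTree → ℕ → Bool
  | .nil, _ => false
  | .node v l r, x => (x == v) || memB l x || memB r x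

/-- The number of children of the (unique, for permutations) node labelled `x`. -/
def numChildren : BTree → ℕ → ℕ
  | .nil, _ => 0
  | .node v l r, x =>
      if x = v then (if l = .nil then 0 else 1) + (if r = .nil then 0 else 1)
      else numChildren l x + numChildren r x

/-- `x` is a leaf of the tree: it occurs in the tree and has no children. -/
def IsLeaf (t : BTree) (x : ℕ) : Prop := t.memB x = true ∧ t.numChildren x = 0

instance (t : BTree) (x : ℕ) : Decidable (t.IsLeaf x) := by unfold IsLeaf; infer_instance

/-- `childB t x y = true` iff `x` is a child of `y` in `t`, i.e. `x` is the root of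
the left or the right subtree hanging from `y`. -/
def childB : BTree → ℕ → ℕ → Bool
  | .nil, _, _ => false
  | .node v l r, x, y =>
      ((y == v) && (l.rootVal == some x || r.rootVal == some x))
      || childB l x y || childB r x y

/-- `ancB t x y = true` iff `x` is a (strict) ancestor of `y` in `t`, i.e. `y` lies
in a subtree hanging from `x`. -/
def ancB : BTree → ℕ → ℕ → Bool
  | .nil, _, _ => false
  | .node v l r, x, y =>
      ((x == v) && (memB l y || memB r y)) || ancB l x y || ancB r x y

end BTree

/-- `x` is the leftmost-eligible extreme letter of `l`: the minimum or the maximum. -/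
def isExtreme (l : List ℕ) (x : ℕ) : Bool :=
  (l.min? == some x) || (l.max? == some x)

/-- Fuelled construction of the minmax tree of a list of distinct naturals:
split the list as `u ++ [m] ++ v` where `m` is the leftmost of the minimum and
maximum letters, put `m` at the root and recurse on `u` (left) and `v` (right). -/
def mmAux : ℕ → List ℕ → BTree
  | 0, _ => .nil
  | fuel+1, l =>
    if l.isEmpty then .nil
    else
      let k := l.findIdx (isExtreme l)
      .node (l.getD k 0) (mmAux fuel (l.take k)) (mmAux fuel (l.drop (k+1)))

/-- The minmax tree `T^m_p` of a word `l` (with distinct letters). -/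
def minmaxTree (l : List ℕ) : BTree := mmAux l.length l

/-- The word `p_1 p_2 … p_n` on the letters `{1,…,n}` associated to a permutation
`p` of `Fin n`. -/
def permList (n : ℕ) (p : Equiv.Perm (Fin n)) : List ℕ :=
  List.ofFn (fun i => (p i : ℕ) + 1)

/-- The `i`-th entry `p_i` (1-indexed) of the permutation `p`. -/
def entryAt (n : ℕ) (p : Equiv.Perm (Fin n)) (i : ℕ) : ℕ :=
  (permList n p).getD (i - 1) 0

section Aux
open List

lemma isExtreme_list_iff {l : List ℕ} {v : ℕ} :
    isExtreme l v = true ↔ (v ∈ l ∧ ((∀ b ∈ l, v ≤ b) ∨ (∀ b ∈ l, b ≤ v))) := by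
  unfold isExtreme
  rw [Bool.or_eq_true, beq_iff_eq, beq_iff_eq, List.min?_eq_some_iff', List.max?_eq_some_iff']
  constructor
  · rintro (⟨h1, h2⟩ | ⟨h1, h2⟩) <;> exact ⟨h1, by tauto⟩
  · rintro ⟨h1, h2 | h2⟩ <;> [left; right] <;> exact ⟨h1, h2⟩

lemma isExtreme_congr {l₁ l₂ : List ℕ} (hmin : l₁.min? = l₂.min?) (hmax : l₁.max? = l₂.max?) :
    isExtreme l₁ = isExtreme l₂ := by
  funext v; unfold isExtreme; rw [hmin, hmax]

lemma min?_eq_of_mem_iff {l₁ l₂ : List ℕ} (h : ∀ x, x ∈ l₁ ↔ x ∈ l₂) :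
    l₁.min? = l₂.min? := by
  rcases hm : l₁.min? with _ | m
  · rw [List.min?_eq_none_iff] at hm
    subst hm
    rcases hm2 : l₂.min? with _ | m
    · rfl
    · rw [List.min?_eq_some_iff'] at hm2
      exact absurd ((h m).2 hm2.1) List.not_mem_nil
  · rw [List.min?_eq_some_iff'] at hm
    exact (List.min?_eq_some_iff'.mpr ⟨(h m).1 hm.1, fun b hb => hm.2 b ((h b).2 hb)⟩).symm

lemma max?_eq_of_mem_iff {l₁ l₂ : List ℕ} (h : ∀ x, x ∈ l₁ ↔ x ∈ l₂) :
    l₁.max? = l₂.max? := by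
  rcases hm : l₁.max? with _ | m
  · rw [List.max?_eq_none_iff] at hm
    subst hm
    rcases hm2 : l₂.max? with _ | m
    · rfl
    · rw [List.max?_eq_some_iff'] at hm2
      exact absurd ((h m).2 hm2.1) List.not_mem_nil
  · rw [List.max?_eq_some_iff'] at hm
    exact (List.max?_eq_some_iff'.mpr ⟨(h m).1 hm.1, fun b hb => hm.2 b ((h b).2 hb)⟩).symm

lemma extreme_exists {l : List ℕ} (hl : l ≠ []) : ∃ x ∈ l, isExtreme l x = true := by
  rcases hm : l.min? with _ | m
  · exact absurd (List.min?_eq_none_iff.mp hm) hl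
  · rw [List.min?_eq_some_iff'] at hm
    exact ⟨m, hm.1, isExtreme_list_iff.mpr ⟨hm.1, Or.inl hm.2⟩⟩

lemma findIdx_isExtreme_lt {l : List ℕ} (hl : l ≠ []) :
    l.findIdx (isExtreme l) < l.length :=
  List.findIdx_lt_length_of_exists (extreme_exists hl)

lemma findIdx_eq_of {p : ℕ → Bool} : ∀ {l : List ℕ} {i : ℕ} (h : i < l.length),
    p (l[i]) = true → (∀ j (hj : j < i), ¬ (p (l[j]'(lt_trans hj h)) = true)) →
    l.findIdx p = i
  | [], i, h => by simp at h
  | a :: l, 0, h => by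
    intro h1 _
    simp only [List.getElem_cons_zero] at h1
    simp [List.findIdx_cons, h1]
  | a :: l, i+1, h => by
    intro h1 h2
    have hpa : ¬ (p a = true) := h2 0 (Nat.succ_pos i)
    rw [List.findIdx_cons]
    simp only [Bool.eq_false_iff.mpr hpa, cond_false]
    have := findIdx_eq_of (p := p) (l := l) (i := i) (by simpa using h)
      (by simpa using h1) (fun j hj => by
        have := h2 (j+1) (by omega)
        simpa using this)
    omega

lemma mmAux_nil : ∀ f, mmAux f [] = .nil
  | 0 => rfl
  | _+1 => by simp [mmAux]

lemma mmAux_cons_eq (f : ℕ) {l : List ℕ} (hl : l ≠ []) :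
    mmAux (f+1) l = .node (l.getD (l.findIdx (isExtreme l)) 0)
      (mmAux f (l.take (l.findIdx (isExtreme l))))
      (mmAux f (l.drop (l.findIdx (isExtreme l) + 1))) := by
  rw [mmAux]
  simp [List.isEmpty_iff, hl]

lemma mmAux_congr : ∀ f₁ f₂ (l : List ℕ), l.length ≤ f₁ → l.length ≤ f₂ →
    mmAux f₁ l = mmAux f₂ l := by
  intro f₁
  induction f₁ with
  | zero =>
    intro f₂ l h1 _
    rw [List.length_eq_zero_iff.mp (Nat.le_zero.mp h1), mmAux_nil, mmAux_nil]
  | succ f ih =>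
    intro f₂ l h1 h2
    rcases eq_or_ne l [] with rfl | hl
    · rw [mmAux_nil, mmAux_nil]
    rcases f₂ with _ | f₂
    · simp [List.length_eq_zero_iff.mp (Nat.le_zero.mp h2)] at hl
    have hk := findIdx_isExtreme_lt hl
    rw [mmAux_cons_eq f hl, mmAux_cons_eq f₂ hl]
    have h3 : (l.take (l.findIdx (isExtreme l))).length ≤ f := by
      simp only [List.length_take]; omega
    have h4 : (l.drop (l.findIdx (isExtreme l) + 1)).length ≤ f := by
      simp only [List.length_drop]; omega
    rw [ih f₂ _ h3 (by simp only [List.length_take]; omega),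
      ih f₂ _ h4 (by simp only [List.length_drop]; omega)]

lemma minmaxTree_eq {f : ℕ} {l : List ℕ} (h : l.length ≤ f) : mmAux f l = minmaxTree l :=
  mmAux_congr f l.length l h le_rfl

lemma minmaxTree_unfold {l : List ℕ} (hl : l ≠ []) :
    minmaxTree l = .node (l.getD (l.findIdx (isExtreme l)) 0)
      (minmaxTree (l.take (l.findIdx (isExtreme l))))
      (minmaxTree (l.drop (l.findIdx (isExtreme l) + 1))) := by
  have hk := findIdx_isExtreme_lt hl
  have : l.length = (l.length - 1) + 1 := by
    have := List.length_pos_iff.mpr hl; omega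
  rw [minmaxTree, this, mmAux_cons_eq _ hl,
    minmaxTree_eq (by simp only [List.length_take]; omega),
    minmaxTree_eq (by simp only [List.length_drop]; omega)]

lemma minmaxTree_eq_nil_iff {l : List ℕ} : minmaxTree l = .nil ↔ l = [] := by
  constructor
  · intro h
    by_contra hl
    rw [minmaxTree_unfold hl] at h
    exact BTree.noConfusion h
  · rintro rfl; rfl

lemma list_decomp {l : List ℕ} {k : ℕ} (hk : k < l.length) :
    l = l.take k ++ l[k] :: l.drop (k+1) := by
  conv_lhs => rw [← List.take_append_drop k l]
  rw [List.drop_eq_getElem_cons hk]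

lemma memB_minmaxTree {a : ℕ} : ∀ N (l : List ℕ), l.length ≤ N →
    ((minmaxTree l).memB a = true ↔ a ∈ l) := by
  intro N
  induction N with
  | zero =>
    intro l h
    rw [List.length_eq_zero_iff.mp (Nat.le_zero.mp h)]
    simp [minmaxTree, mmAux_nil, BTree.memB]
  | succ N ih =>
    intro l h
    rcases eq_or_ne l [] with rfl | hl
    · simp [minmaxTree, mmAux_nil, BTree.memB]
    have hk := findIdx_isExtreme_lt hl
    set k := l.findIdx (isExtreme l) with hkdef
    rw [minmaxTree_unfold hl, ← hkdef]
    rw [BTree.memB]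
    rw [List.getD_eq_getElem l 0 hk]
    simp only [Bool.or_eq_true, beq_iff_eq]
    rw [ih _ (by simp only [List.length_take]; omega),
      ih _ (by simp only [List.length_drop]; omega)]
    conv_rhs => rw [list_decomp hk]
    simp only [List.mem_append, List.mem_cons]
    tauto

lemma numChildren_eq_zero_of_not_memB : ∀ (t : BTree) (a : ℕ), t.memB a = false →
    t.numChildren a = 0
  | .nil, a, _ => rfl
  | .node v L R, a, h => by
    rw [BTree.memB] at h
    simp only [Bool.or_eq_false_iff, beq_eq_false_iff_ne, ne_eq] at h
    rw [BTree.numChildren, if_neg h.1.1,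
      numChildren_eq_zero_of_not_memB L a h.1.2, numChildren_eq_zero_of_not_memB R a h.2]

lemma memB_false_of_not_mem {a : ℕ} {l : List ℕ} (h : a ∉ l) :
    (minmaxTree l).memB a = false := by
  rw [Bool.eq_false_iff, Ne, memB_minmaxTree l.length l le_rfl]
  exact h

lemma isLeaf_node_right {v : ℕ} {L R : BTree} {a : ℕ} (hne : a ≠ v)
    (hL : L.memB a = false) : (BTree.node v L R).IsLeaf a ↔ R.IsLeaf a := by
  unfold BTree.IsLeaf
  rw [BTree.memB, BTree.numChildren, if_neg hne,
    numChildren_eq_zero_of_not_memB L a hL, hL]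
  simp [hne]

lemma isLeaf_node_left {v : ℕ} {L R : BTree} {a : ℕ} (hne : a ≠ v)
    (hR : R.memB a = false) : (BTree.node v L R).IsLeaf a ↔ L.IsLeaf a := by
  unfold BTree.IsLeaf
  rw [BTree.memB, BTree.numChildren, if_neg hne,
    numChildren_eq_zero_of_not_memB R a hR, hR]
  simp [hne]

/-- Fuelled recursion for the suffix leaf criterion. -/
def leafBAux : ℕ → List ℕ → Bool
  | 0, _ => false
  | _+1, [] => false
  | _+1, [_] => true
  | f+1, a :: b :: s =>
      if isExtreme (a :: b :: s) a then false
      else leafBAux f ((a :: b :: s).take ((a :: b :: s).findIdx (isExtreme (a :: b :: s))))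

/-- The suffix leaf criterion. -/
def leafB (l : List ℕ) : Bool := leafBAux l.length l

lemma leafBAux_congr : ∀ f₁ f₂ (l : List ℕ), l.length ≤ f₁ → l.length ≤ f₂ →
    leafBAux f₁ l = leafBAux f₂ l := by
  intro f₁
  induction f₁ with
  | zero =>
    intro f₂ l h1 _
    rw [List.length_eq_zero_iff.mp (Nat.le_zero.mp h1)]
    rcases f₂ with _ | f₂ <;> rfl
  | succ f ih =>
    intro f₂ l h1 h2
    match l, f₂ with
    | [], f₂ => rcases f₂ with _ | f₂ <;> rfl
    | [a], f₂ =>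
      rcases f₂ with _ | f₂
      · simp at h2
      · rfl
    | a :: b :: s, 0 => simp at h2
    | a :: b :: s, f₂+1 =>
      rw [leafBAux, leafBAux]
      rcases h : isExtreme (a :: b :: s) a with _ | _
      · simp only [Bool.false_eq_true, if_false]
        have hk := findIdx_isExtreme_lt (l := a :: b :: s) (by simp)
        apply ih
        · simp only [List.length_take]
          simp only [List.length_cons] at h1 hk ⊢; omega
        · simp only [List.length_take]
          simp only [List.length_cons] at h2 hk ⊢; omega
      · simp

lemma leafB_singleton (a : ℕ) : leafB [a] = true := rfl

lemma leafB_cons {a : ℕ} {s : List ℕ} (hs : s ≠ []) :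
    leafB (a :: s) = if isExtreme (a :: s) a then false
      else leafB ((a :: s).take ((a :: s).findIdx (isExtreme (a :: s)))) := by
  rcases s with _ | ⟨b, s⟩
  · exact absurd rfl hs
  rw [leafB, List.length_cons, leafBAux]
  rcases h : isExtreme (a :: b :: s) a with _ | _
  · simp only [Bool.false_eq_true, if_false]
    have hk := findIdx_isExtreme_lt (l := a :: b :: s) (by simp)
    rw [leafB]
    apply leafBAux_congr
    · simp only [List.length_take]
      simp only [List.length_cons] at hk ⊢; omega
    · simp
  · simp

lemma isLeaf_iff_leafB : ∀ N (x : List ℕ) (a : ℕ) (s : List ℕ),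
    (x ++ a :: s).length ≤ N → (x ++ a :: s).Nodup →
    ((minmaxTree (x ++ a :: s)).IsLeaf a ↔ leafB (a :: s) = true) := by
  intro N
  induction N with
  | zero => intro x a s h _; simp at h
  | succ N ih =>
    intro x a s hlen hnd
    have hlne : x ++ a :: s ≠ [] := by simp
    have hlens : (x ++ a :: s).length = x.length + 1 + s.length := by simp; omega
    obtain ⟨k, hfindeq⟩ : ∃ k, (x ++ a :: s).findIdx (isExtreme (x ++ a :: s)) = k :=
      ⟨_, rfl⟩
    have hk : k < (x ++ a :: s).length := hfindeq ▸ findIdx_isExtreme_lt hlne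
    have hxlt : x.length < (x ++ a :: s).length := by omega
    have hgetx : (x ++ a :: s)[x.length]'hxlt = a := by
      rw [List.getElem_append_right le_rfl]
      simp
    have hndx : a ∉ x ∧ a ∉ s ∧ x.Nodup := by
      rw [List.nodup_append] at hnd
      refine ⟨fun hx => hnd.2.2 a hx a List.mem_cons_self rfl, by simp at hnd; tauto, hnd.1⟩
    have hnd' : (x ++ a :: s).Nodup := by
      rw [List.nodup_append]; rw [List.nodup_append] at hnd; exact hnd
    have hkext : isExtreme (x ++ a :: s) ((x ++ a :: s)[k]'hk) = true := by
      subst hfindeq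
      exact List.findIdx_getElem (w := hk)
    have hlt : ∀ j (hj : j < k), isExtreme (x ++ a :: s) ((x ++ a :: s)[j]'(lt_trans hj hk)) = false := by
      intro j hj
      subst hfindeq
      simpa using List.not_of_lt_findIdx hj
    have hunf := minmaxTree_unfold hlne
    rw [hfindeq, List.getD_eq_getElem _ 0 hk] at hunf
    rcases lt_trichotomy k x.length with hc | hc | hc
    · -- pivot inside the prefix x : recurse on the right subtree
      have hdrop : (x ++ a :: s).drop (k+1) = x.drop (k+1) ++ a :: s :=
        List.drop_append_of_le_length (by omega)
      have htake : (x ++ a :: s).take k = x.take k := List.take_append_of_le_length (by omega)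
      have hmne : a ≠ (x ++ a :: s)[k]'hk := by
        have hmem : (x ++ a :: s)[k]'hk ∈ x := by
          rw [List.getElem_append_left hc]
          exact List.getElem_mem _
        exact fun h => hndx.1 (h ▸ hmem)
      have hmemL : (minmaxTree ((x ++ a :: s).take k)).memB a = false := by
        apply memB_false_of_not_mem
        rw [htake]
        exact fun h => hndx.1 (List.take_subset k x h)
      rw [hunf, isLeaf_node_right hmne hmemL, hdrop]
      apply ih
      · simp at hlen ⊢; omega
      · rw [← hdrop]
        exact (List.drop_sublist _ _).nodup hnd
    · -- pivot is a itself
      subst hc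
      have hgetk : (x ++ a :: s)[x.length]'hk = a := hgetx
      have htake : (x ++ a :: s).take x.length = x := List.take_left ..
      have hdrop : (x ++ a :: s).drop (x.length+1) = s := by
        have h2 : x ++ a :: s = (x ++ [a]) ++ s := by simp
        rw [h2, show x.length + 1 = (x ++ [a]).length by simp, List.drop_left]
      rw [hgetk, htake, hdrop] at hunf
      have hExtA : isExtreme (x ++ a :: s) a = true := by
        have h := hkext; rw [hgetk] at h; exact h
      rcases s with _ | ⟨b, s'⟩
      · -- s = [] : a is a leaf iff x = [], and indeed x must be []
        have hxnil : x = [] := by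
          by_contra hx
          have hchar := isExtreme_list_iff.mp hExtA
          obtain ⟨w, hw⟩ : ∃ w, w ∈ x := by
            rcases x with _ | ⟨w, x'⟩
            · exact absurd rfl hx
            · exact ⟨w, List.mem_cons_self ..⟩
          have hwl : w ∈ x ++ [a] := List.mem_append_left _ hw
          have hwa : w ≠ a := fun h => hndx.1 (h ▸ hw)
          obtain ⟨v, hvx, hvext⟩ : ∃ v, v ∈ x ∧ isExtreme (x ++ [a]) v = true := by
            rcases hchar.2 with hmin | hmax
            · obtain ⟨M, hM⟩ : ∃ M, (x ++ [a]).max? = some M := by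
                rcases hM : (x ++ [a]).max? with _ | M
                · exact absurd (List.max?_eq_none_iff.mp hM) hlne
                · exact ⟨M, rfl⟩
              rw [List.max?_eq_some_iff'] at hM
              have hMne : M ≠ a := by
                intro h
                subst h
                exact hwa (le_antisymm (hM.2 w hwl) (hmin w hwl))
              have hMx : M ∈ x := by
                have := hM.1
                simp at this
                tauto
              exact ⟨M, hMx, isExtreme_list_iff.mpr ⟨hM.1, Or.inr hM.2⟩⟩
            · obtain ⟨m, hm⟩ : ∃ m, (x ++ [a]).min? = some m := by
                rcases hm : (x ++ [a]).min? with _ | m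
                · exact absurd (List.min?_eq_none_iff.mp hm) hlne
                · exact ⟨m, rfl⟩
              rw [List.min?_eq_some_iff'] at hm
              have hmne : m ≠ a := by
                intro h
                subst h
                exact hwa (le_antisymm (hmax w hwl) (hm.2 w hwl))
              have hmx : m ∈ x := by
                have := hm.1
                simp at this
                tauto
              exact ⟨m, hmx, isExtreme_list_iff.mpr ⟨hm.1, Or.inl hm.2⟩⟩
          obtain ⟨idx, hidx, hidxv⟩ := List.getElem_of_mem hvx
          have heq : (x ++ [a])[idx]'(by simp; omega) = v := by
            rw [List.getElem_append_left hidx, hidxv]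
          exact absurd (heq ▸ hlt idx (by omega)) (by rw [hvext]; simp)
        subst hxnil
        rw [hunf]
        unfold BTree.IsLeaf BTree.numChildren BTree.memB
        simp [minmaxTree, mmAux_nil, leafB_singleton]
      · -- s ≠ [] : a has a right child, and a is extreme in the suffix
        have hExtSuf : isExtreme (a :: b :: s') a = true := by
          rw [isExtreme_list_iff] at hExtA ⊢
          refine ⟨List.mem_cons_self .., ?_⟩
          have hsub : ∀ c ∈ a :: b :: s', c ∈ x ++ a :: b :: s' := by
            intro c hc
            exact List.mem_append_right _ hc
          rcases hExtA.2 with h | h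
          · exact Or.inl fun c hc => h c (hsub c hc)
          · exact Or.inr fun c hc => h c (hsub c hc)
        rw [leafB_cons (by simp), if_pos hExtSuf, hunf]
        unfold BTree.IsLeaf BTree.numChildren BTree.memB
        have hnn : minmaxTree (b :: s') ≠ .nil := by
          rw [Ne, minmaxTree_eq_nil_iff]
          simp
        simp [hnn]
    · -- pivot inside the suffix s : recurse on the left subtree
      obtain ⟨j, hjk⟩ : ∃ j, k = x.length + 1 + j := ⟨k - x.length - 1, by omega⟩
      have hj : j < s.length := by omega
      have hsne : s ≠ [] := List.ne_nil_of_length_pos (by omega)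
      have htake : (x ++ a :: s).take k = x ++ a :: s.take j := by
        rw [List.take_append, List.take_of_length_le (by omega)]
        congr 1
        rw [show k - x.length = j + 1 by omega, List.take_succ_cons]
      have hgetk : (x ++ a :: s)[k]'hk = s[j]'hj := by
        rw [List.getElem_append_right (by omega)]
        simp only [show k - x.length = j + 1 by omega, List.getElem_cons_succ]
      have hane : a ≠ (x ++ a :: s)[k]'hk := by
        rw [hgetk]
        exact fun h => hndx.2.1 (h ▸ List.getElem_mem _)
      have hdropnm : (minmaxTree ((x ++ a :: s).drop (k+1))).memB a = false := by
        apply memB_false_of_not_mem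
        intro hmem
        apply hndx.2.1
        have h2 : (x ++ a :: s).drop (k+1) = s.drop (j+1) := by
          rw [show x ++ a :: s = (x ++ [a]) ++ s by simp, List.drop_append,
            List.drop_eq_nil_of_le (by simp; omega)]
          simp only [List.nil_append, List.length_append, List.length_singleton]
          congr 1
          omega
        rw [h2] at hmem
        exact List.drop_subset _ _ hmem
      rw [hunf, isLeaf_node_left hane hdropnm, htake]
      rw [ih x a (s.take j) (by rw [← htake]; simp; omega)
        (by rw [← htake]; exact (List.take_sublist _ _).nodup hnd)]
      -- identify leafB (a :: s.take j) with leafB (a :: s)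
      have hextmem : ∀ v, isExtreme (x ++ a :: s) v = true → v ∈ s := by
        intro v hv
        have hvl : v ∈ x ++ a :: s := (isExtreme_list_iff.mp hv).1
        simp only [List.mem_append, List.mem_cons] at hvl
        rcases hvl with hvx | rfl | hvs
        · obtain ⟨idx, hidx, hidxv⟩ := List.getElem_of_mem hvx
          have heq : (x ++ a :: s)[idx]'(by omega) = v := by
            rw [List.getElem_append_left hidx, hidxv]
          exact absurd (heq ▸ hlt idx (by omega)) (by rw [hv]; simp)
        · exact absurd (hgetx ▸ hlt x.length hc) (by rw [hv]; simp)
        · exact hvs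
      obtain ⟨m, hm⟩ : ∃ m, (x ++ a :: s).min? = some m := by
        rcases hm : (x ++ a :: s).min? with _ | m
        · exact absurd (List.min?_eq_none_iff.mp hm) hlne
        · exact ⟨m, rfl⟩
      obtain ⟨M, hM⟩ : ∃ M, (x ++ a :: s).max? = some M := by
        rcases hM : (x ++ a :: s).max? with _ | M
        · exact absurd (List.max?_eq_none_iff.mp hM) hlne
        · exact ⟨M, rfl⟩
      have hm' := List.min?_eq_some_iff'.mp hm
      have hM' := List.max?_eq_some_iff'.mp hM
      have hms : m ∈ s := hextmem m (isExtreme_list_iff.mpr ⟨hm'.1, Or.inl hm'.2⟩)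
      have hMs : M ∈ s := hextmem M (isExtreme_list_iff.mpr ⟨hM'.1, Or.inr hM'.2⟩)
      have hsubl : ∀ c ∈ a :: s, c ∈ x ++ a :: s := fun c hc => List.mem_append_right _ hc
      have hmin2 : (a :: s).min? = some m :=
        List.min?_eq_some_iff'.mpr ⟨List.mem_cons_of_mem a hms,
          fun b hb => hm'.2 b (hsubl b hb)⟩
      have hmax2 : (a :: s).max? = some M :=
        List.max?_eq_some_iff'.mpr ⟨List.mem_cons_of_mem a hMs,
          fun b hb => hM'.2 b (hsubl b hb)⟩
      have hEeq : isExtreme (a :: s) = isExtreme (x ++ a :: s) :=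
        isExtreme_congr (hmin2.trans hm.symm) (hmax2.trans hM.symm)
      have hEa : isExtreme (x ++ a :: s) a = false := by
        have h := hlt x.length hc; rw [hgetx] at h; exact h
      have hfind : (a :: s).findIdx (isExtreme (a :: s)) = j + 1 := by
        rw [hEeq]
        refine findIdx_eq_of (l := a :: s) (i := j + 1)
          (p := isExtreme (x ++ a :: s)) (by simp; omega) ?_ ?_
        · show isExtreme (x ++ a :: s) ((a :: s)[j+1]'(by simp; omega)) = true
          have heq : (a :: s)[j+1]'(by simp; omega) = (x ++ a :: s)[k]'hk := by
            rw [hgetk]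
            simp
          rw [heq]
          exact hkext
        · intro j' hj'
          have heq : (x ++ a :: s)[x.length + j']'(by simp; omega) = (a :: s)[j']'(by simp; omega) := by
            rw [List.getElem_append_right (by omega)]
            simp only [Nat.add_sub_cancel_left]
          rw [← heq]
          have := hlt (x.length + j') (by omega)
          rw [this]
          simp
      rw [leafB_cons hsne, hEeq, if_neg (by rw [hEa]; simp), ← hEeq, hfind,
        List.take_succ_cons]

lemma leafB_head_extreme {a : ℕ} {s : List ℕ} (hs : s ≠ [])
    (h : isExtreme (a :: s) a = true) : leafB (a :: s) = false := by
  rw [leafB_cons hs, if_pos h]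

lemma leafB_second {a b : ℕ} {u : List ℕ} (ha : isExtreme (a :: b :: u) a = false)
    (hb : isExtreme (a :: b :: u) b = true) : leafB (a :: b :: u) = true := by
  rw [leafB_cons (by simp), if_neg (by rw [ha]; simp)]
  have hfi : (a :: b :: u).findIdx (isExtreme (a :: b :: u)) = 1 := by
    rw [List.findIdx_cons, ha, List.findIdx_cons, hb]
    rfl
  rw [hfi]
  simp [leafB_singleton]

lemma pair_head_extreme {a b : ℕ} : isExtreme [a, b] a = true := by
  rw [isExtreme_list_iff]
  refine ⟨by simp, ?_⟩
  rcases le_total a b with h | h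
  · exact Or.inl (by intro z hz; simp at hz; rcases hz with rfl | rfl <;> omega)
  · exact Or.inr (by intro z hz; simp at hz; rcases hz with rfl | rfl <;> omega)

lemma leafB_third {a b c : ℕ} {u : List ℕ}
    (ha : isExtreme (a :: b :: c :: u) a = false)
    (hb : isExtreme (a :: b :: c :: u) b = false)
    (hc : isExtreme (a :: b :: c :: u) c = true) :
    leafB (a :: b :: c :: u) = false := by
  rw [leafB_cons (by simp), if_neg (by rw [ha]; simp)]
  have hfi : (a :: b :: c :: u).findIdx (isExtreme (a :: b :: c :: u)) = 2 := by
    rw [List.findIdx_cons, ha, List.findIdx_cons, hb, List.findIdx_cons, hc]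
    rfl
  rw [hfi]
  show leafB [a, b] = false
  rw [leafB_cons (by simp), if_pos pair_head_extreme]

lemma min_unique {l : List ℕ} {x y : ℕ} (hx : x ∈ l) (hy : y ∈ l)
    (h1 : ∀ z ∈ l, x ≤ z) (h2 : ∀ z ∈ l, y ≤ z) : x = y :=
  le_antisymm (h1 y hy) (h2 x hx)

lemma max_unique {l : List ℕ} {x y : ℕ} (hx : x ∈ l) (hy : y ∈ l)
    (h1 : ∀ z ∈ l, z ≤ x) (h2 : ∀ z ∈ l, z ≤ y) : x = y :=
  le_antisymm (h2 x hx) (h1 y hy)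

lemma rotB_aux : ∀ N (t : List ℕ) (a b c : ℕ), t.length < N → (a :: b :: c :: t).Nodup →
    (leafB (a :: b :: c :: t)).toNat + (leafB (b :: c :: a :: t)).toNat
      + (leafB (c :: a :: b :: t)).toNat = 1 := by
  intro N
  induction N with
  | zero => intro t a b c h _; omega
  | succ N ih =>
    intro t a b c hlen hnd
    have hmem2 : ∀ x, x ∈ b :: c :: a :: t ↔ x ∈ a :: b :: c :: t := by
      intro x; simp; tauto
    have hmem3 : ∀ x, x ∈ c :: a :: b :: t ↔ x ∈ a :: b :: c :: t := by
      intro x; simp; tauto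
    have hE2 : isExtreme (b :: c :: a :: t) = isExtreme (a :: b :: c :: t) :=
      isExtreme_congr (min?_eq_of_mem_iff hmem2) (max?_eq_of_mem_iff hmem2)
    have hE3 : isExtreme (c :: a :: b :: t) = isExtreme (a :: b :: c :: t) :=
      isExtreme_congr (min?_eq_of_mem_iff hmem3) (max?_eq_of_mem_iff hmem3)
    have hab : a ≠ b := by simp at hnd; tauto
    have hac : a ≠ c := by simp at hnd; tauto
    have hbc : b ≠ c := by simp at hnd; tauto
    have hma : a ∈ a :: b :: c :: t := by simp
    have hmb : b ∈ a :: b :: c :: t := by simp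
    have hmc : c ∈ a :: b :: c :: t := by simp
    rcases hEa : isExtreme (a :: b :: c :: t) a with _ | _ <;>
      rcases hEb : isExtreme (a :: b :: c :: t) b with _ | _ <;>
        rcases hEc : isExtreme (a :: b :: c :: t) c with _ | _
    · -- F F F : recursive case
      obtain ⟨m, hm⟩ : ∃ m, (a :: b :: c :: t).min? = some m := by
        rcases hm : (a :: b :: c :: t).min? with _ | m
        · exact absurd (List.min?_eq_none_iff.mp hm) (by simp)
        · exact ⟨m, rfl⟩
      have hm' := List.min?_eq_some_iff'.mp hm
      have hEm : isExtreme (a :: b :: c :: t) m = true :=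
        isExtreme_list_iff.mpr ⟨hm'.1, Or.inl hm'.2⟩
      have hmt : m ∈ t := by
        have := hm'.1
        simp only [List.mem_cons] at this
        rcases this with rfl | rfl | rfl | h
        · rw [hEa] at hEm; exact absurd hEm (by simp)
        · rw [hEb] at hEm; exact absurd hEm (by simp)
        · rw [hEc] at hEm; exact absurd hEm (by simp)
        · exact h
      have hk0 : t.findIdx (isExtreme (a :: b :: c :: t)) < t.length :=
        List.findIdx_lt_length_of_exists ⟨m, hmt, hEm⟩
      set k0 := t.findIdx (isExtreme (a :: b :: c :: t)) with hk0def
      have key : ∀ u v w : ℕ, isExtreme (u :: v :: w :: t) = isExtreme (a :: b :: c :: t) →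
          isExtreme (a :: b :: c :: t) u = false → isExtreme (a :: b :: c :: t) v = false →
          isExtreme (a :: b :: c :: t) w = false →
          leafB (u :: v :: w :: t) = leafB (u :: v :: w :: t.take k0) := by
        intro u v w hEuv hu hv hw
        rw [leafB_cons (by simp), if_neg (by rw [hEuv, hu]; simp)]
        have hfi : (u :: v :: w :: t).findIdx (isExtreme (u :: v :: w :: t)) = k0 + 3 := by
          rw [hEuv, List.findIdx_cons, hu, List.findIdx_cons, hv, List.findIdx_cons, hw]
          simp only [cond_false]
          rfl
        rw [hfi]
        rfl
      rw [key a b c rfl hEa hEb hEc, key b c a hE2 hEb hEc hEa, key c a b hE3 hEc hEa hEb]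
      apply ih
      · simp only [List.length_take]
        omega
      · exact hnd.sublist
          ((((List.take_sublist k0 t).cons₂ c).cons₂ b).cons₂ a)
    · -- F F T
      rw [leafB_third hEa hEb hEc,
        leafB_second (by rw [hE2, hEb]) (by rw [hE2]; exact hEc),
        leafB_head_extreme (by simp) (by rw [hE3]; exact hEc)]
      rfl
    · -- F T F
      rw [leafB_second hEa hEb,
        leafB_head_extreme (by simp) (by rw [hE2]; exact hEb),
        leafB_third (by rw [hE3, hEc]) (by rw [hE3, hEa]) (by rw [hE3]; exact hEb)]
      rfl
    · -- F T T
      rw [leafB_second hEa hEb,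
        leafB_head_extreme (by simp) (by rw [hE2]; exact hEb),
        leafB_head_extreme (by simp) (by rw [hE3]; exact hEc)]
      rfl
    · -- T F F
      rw [leafB_head_extreme (by simp) hEa,
        leafB_third (by rw [hE2, hEb]) (by rw [hE2, hEc]) (by rw [hE2]; exact hEa),
        leafB_second (by rw [hE3, hEc]) (by rw [hE3]; exact hEa)]
      rfl
    · -- T F T
      rw [leafB_head_extreme (by simp) hEa,
        leafB_second (by rw [hE2, hEb]) (by rw [hE2]; exact hEc),
        leafB_head_extreme (by simp) (by rw [hE3]; exact hEc)]
      rfl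
    · -- T T F
      rw [leafB_head_extreme (by simp) hEa,
        leafB_head_extreme (by simp) (by rw [hE2]; exact hEb),
        leafB_second (by rw [hE3, hEc]) (by rw [hE3]; exact hEa)]
      rfl
    · -- T T T : impossible
      exfalso
      have hA := (isExtreme_list_iff.mp hEa).2
      have hB := (isExtreme_list_iff.mp hEb).2
      have hC := (isExtreme_list_iff.mp hEc).2
      rcases hA with hA | hA <;> rcases hB with hB | hB <;> rcases hC with hC | hC
      · exact hab (min_unique hma hmb hA hB)
      · exact hab (min_unique hma hmb hA hB)
      · exact hac (min_unique hma hmc hA hC)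
      · exact hbc (max_unique hmb hmc hB hC)
      · exact hbc (min_unique hmb hmc hB hC)
      · exact hac (max_unique hma hmc hA hC)
      · exact hab (max_unique hma hmb hA hB)
      · exact hab (max_unique hma hmb hA hB)

lemma isLeaf_iff_leafB' {l : List ℕ} (hnd : l.Nodup) {i0 : ℕ} (h : i0 < l.length) :
    ((minmaxTree l).IsLeaf (l[i0]'h) ↔ leafB (l.drop i0) = true) := by
  have hdec : l = l.take i0 ++ l[i0] :: l.drop (i0+1) := list_decomp h
  rw [List.drop_eq_getElem_cons h]
  have hmain := isLeaf_iff_leafB (l.take i0 ++ l[i0] :: l.drop (i0+1)).length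
    (l.take i0) (l[i0]'h) (l.drop (i0+1)) le_rfl (hdec ▸ hnd)
  rw [← hdec] at hmain
  exact hmain

lemma permList_length (n : ℕ) (p : Equiv.Perm (Fin n)) : (permList n p).length = n := by
  simp [permList]

lemma permList_nodup (n : ℕ) (p : Equiv.Perm (Fin n)) : (permList n p).Nodup :=
  List.nodup_ofFn.mpr (fun i j h => p.injective (by omega))

lemma permList_getElem (n : ℕ) (p : Equiv.Perm (Fin n)) (j : ℕ) (h : j < n) :
    (permList n p)[j]'(by rw [permList_length]; exact h) = (p ⟨j, h⟩ : ℕ) + 1 := by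
  simp [permList]

end Aux

set_option maxHeartbeats 1000000 in
/-- For `n ≥ 3` and `1 ≤ i ≤ n − 2`, the number of permutations `p`
of `{1,…,n}` whose minmax tree contains the entry `p_i` as a leaf is exactly `n!/3`. -/
theorem entry_leaf_count (n : ℕ) (hn : 3 ≤ n) (i : ℕ) (hi1 : 1 ≤ i) (hi2 : i ≤ n - 2) :
    (Finset.univ.filter (fun p : Equiv.Perm (Fin n) =>
        (minmaxTree (permList n p)).IsLeaf (entryAt n p i))).card = n.factorial / 3 := by
  obtain ⟨i0, hi0def⟩ : ∃ i0, i0 = i - 1 := ⟨i - 1, rfl⟩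
  have hi0 : i0 + 2 < n := by omega
  obtain ⟨I0, hI0⟩ : ∃ v : Fin n, (v : ℕ) = i0 := ⟨⟨i0, by omega⟩, rfl⟩
  obtain ⟨I1, hI1⟩ : ∃ v : Fin n, (v : ℕ) = i0 + 1 := ⟨⟨i0 + 1, by omega⟩, rfl⟩
  obtain ⟨I2, hI2⟩ : ∃ v : Fin n, (v : ℕ) = i0 + 2 := ⟨⟨i0 + 2, by omega⟩, rfl⟩
  obtain ⟨c3, hc3⟩ : ∃ c3 : Equiv.Perm (Fin n), c3 = Equiv.swap I0 I2 * Equiv.swap I0 I1 :=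
    ⟨_, rfl⟩
  have hne01 : I0 ≠ I1 := by intro h; rw [h] at hI0; omega
  have hne02 : I0 ≠ I2 := by intro h; rw [h] at hI0; omega
  have hne12 : I1 ≠ I2 := by intro h; rw [h] at hI1; omega
  have hc30 : c3 I0 = I1 := by
    rw [hc3]
    simp [Equiv.swap_apply_of_ne_of_ne hne01.symm hne12]
  have hc31 : c3 I1 = I2 := by
    rw [hc3]
    simp [Equiv.swap_apply_of_ne_of_ne hne01.symm hne12]
  have hc32 : c3 I2 = I0 := by
    rw [hc3]
    simp [Equiv.swap_apply_of_ne_of_ne hne02.symm hne12.symm]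
  have hc3fix : ∀ j : Fin n, j ≠ I0 → j ≠ I1 → j ≠ I2 → c3 j = j := by
    intro j h0 h1 h2
    rw [hc3]
    simp [Equiv.swap_apply_of_ne_of_ne h0 h1, Equiv.swap_apply_of_ne_of_ne h0 h2]
  set P : Equiv.Perm (Fin n) → Prop := fun p =>
    (minmaxTree (permList n p)).IsLeaf (entryAt n p i) with hP
  -- the suffix decomposition of the word of a permutation
  have hi0len : ∀ q : Equiv.Perm (Fin n), i0 < (permList n q).length := by
    intro q; rw [permList_length]; omega
  have hdrop3 : ∀ q : Equiv.Perm (Fin n),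
      (permList n q).drop i0 = ((q I0 : ℕ) + 1) :: ((q I1 : ℕ) + 1) :: ((q I2 : ℕ) + 1)
        :: (permList n q).drop (i0 + 3) := by
    intro q
    rw [List.drop_eq_getElem_cons (by rw [permList_length]; omega : i0 < (permList n q).length),
      List.drop_eq_getElem_cons (by rw [permList_length]; omega : i0 + 1 < (permList n q).length),
      List.drop_eq_getElem_cons (by rw [permList_length]; omega : i0 + 2 < (permList n q).length)]
    rw [permList_getElem n q i0 (by omega), permList_getElem n q (i0+1) (by omega),
      permList_getElem n q (i0+2) (by omega)]
    have e0 : (⟨i0, by omega⟩ : Fin n) = I0 := by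
      apply Fin.ext; simp [hI0]
    have e1 : (⟨i0 + 1, by omega⟩ : Fin n) = I1 := by
      apply Fin.ext; simp [hI1]
    have e2 : (⟨i0 + 2, by omega⟩ : Fin n) = I2 := by
      apply Fin.ext; simp [hI2]
    rw [e0, e1, e2]
  have hPleaf : ∀ q : Equiv.Perm (Fin n), P q ↔ leafB ((permList n q).drop i0) = true := by
    intro q
    have hent : entryAt n q i = (permList n q)[i0]'(hi0len q) := by
      rw [entryAt, ← hi0def, List.getD_eq_getElem _ 0 (hi0len q)]
    rw [hP]
    simp only [hent]
    exact isLeaf_iff_leafB' (permList_nodup n q) (hi0len q)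
  -- the tails agree after composing with the 3-cycle
  have htail : ∀ q : Equiv.Perm (Fin n),
      (permList n (q * c3)).drop (i0 + 3) = (permList n q).drop (i0 + 3) := by
    intro q
    apply List.ext_getElem
    · simp [permList_length]
    · intro j h1 h2
      rw [List.getElem_drop, List.getElem_drop]
      have hb : i0 + 3 + j < n := by
        simp [permList_length] at h1
        omega
      rw [permList_getElem n _ _ hb, permList_getElem n _ _ hb]
      have hfix : c3 ⟨i0 + 3 + j, hb⟩ = ⟨i0 + 3 + j, hb⟩ := by
        apply hc3fix <;>
          · intro h
            have hv := congrArg Fin.val h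
            simp only [hI0, hI1, hI2, Fin.val_mk] at hv
            omega
      rw [Equiv.Perm.mul_apply, hfix]
  -- exactly one of p, p*c3, p*c3*c3 satisfies P
  have hone : ∀ p : Equiv.Perm (Fin n),
      (if P p then 1 else 0) + (if P (p * c3) then 1 else 0)
        + (if P (p * c3 * c3) then 1 else 0) = 1 := by
    intro p
    set a := (p I0 : ℕ) + 1
    set b := (p I1 : ℕ) + 1
    set c := (p I2 : ℕ) + 1
    set T := (permList n p).drop (i0 + 3) with hT
    have h1 : (permList n p).drop i0 = a :: b :: c :: T := hdrop3 p
    have h2 : (permList n (p * c3)).drop i0 = b :: c :: a :: T := by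
      rw [hdrop3 (p * c3), htail p]
      simp only [Equiv.Perm.mul_apply, hc30, hc31, hc32]
      rfl
    have h3 : (permList n (p * c3 * c3)).drop i0 = c :: a :: b :: T := by
      rw [hdrop3 (p * c3 * c3), htail (p * c3), htail p]
      simp only [Equiv.Perm.mul_apply, hc30, hc31, hc32]
      rfl
    have hndsuf : (a :: b :: c :: T).Nodup := by
      rw [← h1]
      exact (List.drop_sublist _ _).nodup (permList_nodup n p)
    have hrot := rotB_aux (T.length + 1) T a b c (by omega) hndsuf
    have e1 : (if P p then 1 else 0) = (leafB (a :: b :: c :: T)).toNat := by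
      rw [← h1]
      rcases hb : leafB ((permList n p).drop i0) with _ | _
      · simp [hPleaf p, hb]
      · simp [hPleaf p, hb]
    have e2 : (if P (p * c3) then 1 else 0) = (leafB (b :: c :: a :: T)).toNat := by
      rw [← h2]
      rcases hb : leafB ((permList n (p * c3)).drop i0) with _ | _
      · simp [hPleaf (p * c3), hb]
      · simp [hPleaf (p * c3), hb]
    have e3 : (if P (p * c3 * c3) then 1 else 0) = (leafB (c :: a :: b :: T)).toNat := by
      rw [← h3]
      rcases hb : leafB ((permList n (p * c3 * c3)).drop i0) with _ | _
      · simp [hPleaf (p * c3 * c3), hb]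
      · simp [hPleaf (p * c3 * c3), hb]
    rw [e1, e2, e3]
    exact hrot
  -- counting
  have hsum1 : ∑ p : Equiv.Perm (Fin n), (if P (p * c3) then 1 else 0)
      = ∑ p : Equiv.Perm (Fin n), (if P p then 1 else 0) :=
    Equiv.sum_comp (Equiv.mulRight c3) (fun q => if P q then 1 else 0)
  have hsum2 : ∑ p : Equiv.Perm (Fin n), (if P (p * c3 * c3) then 1 else 0)
      = ∑ p : Equiv.Perm (Fin n), (if P p then 1 else 0) := by
    have := Equiv.sum_comp (Equiv.mulRight (c3 * c3)) (fun q => if P q then 1 else 0)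
    simpa [mul_assoc] using this
  have hcardsum : (Finset.univ.filter P).card = ∑ p : Equiv.Perm (Fin n),
      (if P p then 1 else 0) := Finset.card_filter _ _
  have htotal : ∑ p : Equiv.Perm (Fin n), ((if P p then 1 else 0)
      + (if P (p * c3) then 1 else 0) + (if P (p * c3 * c3) then 1 else 0)) = n.factorial := by
    rw [Finset.sum_congr rfl (fun p _ => hone p)]
    simp [Fintype.card_perm]
  rw [Finset.sum_add_distrib, Finset.sum_add_distrib, hsum1, hsum2, ← hcardsum] at htotal
  have : (Finset.univ.filter P).card = n.factorial / 3 := by omega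
  exact this
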